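/- Let λ be a partition in the k×l box. Then the Durfee number is preserved by the bar map: d_{bar(λ)} = d_λ. -/

import Mathlib

/-- `lam` (1-indexed; the relevant entries are `lam 1, …, lam l`) is a partition in the
`k × l` box, i.e. `k ≥ λ₁ ≥ λ₂ ≥ … ≥ λ_l ≥ 0`. -/
def IsBoxPartition (k l : ℕ) (lam : ℕ → ℤ) : Prop :=
  lam 1 ≤ (k : ℤ) ∧ (∀ i : ℕ, 1 ≤ i → i < l → lam (i + 1) ≤ lam i) ∧ 0 ≤ lam l

/-- The Durfee number `d_λ`: the largest `i ∈ {1, …, l}` with `λ_i ≥ i`, and `0` if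
no such `i` exists. -/
def durfee (l : ℕ) (lam : ℕ → ℤ) : ℕ :=
  (Finset.Icc 1 l).sup (fun i => if (i : ℤ) ≤ lam i then i else 0)

/-- The bar map `λ ↦ bar(λ)`:
`bar(λ)_i = d_λ + k − λ_{d_λ − i + 1}` for `1 ≤ i ≤ d_λ` and
`bar(λ)_i = d_λ − λ_{l − i + d_λ + 1}` for `d_λ < i ≤ l`. -/
def bar (k l : ℕ) (lam : ℕ → ℤ) : ℕ → ℤ := fun i =>
  if i ≤ durfee l lam then
    (durfee l lam : ℤ) + (k : ℤ) - lam (durfee l lam - i + 1)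
  else
    (durfee l lam : ℤ) - lam (l - i + durfee l lam + 1)

/-- The size `|λ| = λ₁ + ⋯ + λ_l` of a partition in the `k × l` box. -/
def boxSize (l : ℕ) (lam : ℕ → ℤ) : ℤ :=
  ∑ i ∈ Finset.Icc 1 l, lam i

/-- The Poincaré dual `κ̂` of a partition `κ` in the `k × l` box: `κ̂_i = k − κ_{l+1−i}`. -/
def dualP (k l : ℕ) (kap : ℕ → ℤ) : ℕ → ℤ := fun i =>
  (k : ℤ) - kap (l + 1 - i)

lemma lam_anti (k l : ℕ) (lam : ℕ → ℤ) (h : IsBoxPartition k l lam) :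
    ∀ i j, 1 ≤ i → i ≤ j → j ≤ l → lam j ≤ lam i := by
  intro i j hi hij hjl
  induction j with
  | zero => omega
  | succ m ih =>
    rcases Nat.eq_or_lt_of_le hij with heq | hlt
    · rw [heq]
    · exact (h.2.1 m (by omega) (by omega)).trans (ih (by omega) (by omega))

lemma lam_nonneg (k l : ℕ) (lam : ℕ → ℤ) (h : IsBoxPartition k l lam) :
    ∀ j, 1 ≤ j → j ≤ l → 0 ≤ lam j := fun j hj hjl =>
  h.2.2.trans (lam_anti k l lam h j l hj hjl le_rfl)

lemma durfee_le (l : ℕ) (lam : ℕ → ℤ) : durfee l lam ≤ l := by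
  apply Finset.sup_le
  intro i hi
  rw [Finset.mem_Icc] at hi
  split <;> omega

lemma le_durfee (l : ℕ) (lam : ℕ → ℤ) (i : ℕ) (hi : 1 ≤ i) (hil : i ≤ l)
    (h : (i : ℤ) ≤ lam i) : i ≤ durfee l lam := by
  have := Finset.le_sup (f := fun j : ℕ => if (j : ℤ) ≤ lam j then j else 0)
    (b := i) (Finset.mem_Icc.mpr ⟨hi, hil⟩)
  simp only [h, if_true] at this
  exact this

lemma durfee_spec (l : ℕ) (hl : 1 ≤ l) (lam : ℕ → ℤ) (hd : 1 ≤ durfee l lam) :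
    (durfee l lam : ℤ) ≤ lam (durfee l lam) := by
  obtain ⟨i, hi, heq⟩ := Finset.exists_mem_eq_sup (Finset.Icc 1 l)
    (Finset.nonempty_Icc.mpr hl) (fun i => if (i : ℤ) ≤ lam i then i else 0)
  rw [durfee] at *
  split at heq
  · rw [heq]; assumption
  · omega

/-- The Durfee number is preserved by the bar map: `d_{bar(λ)} = d_λ`. -/
theorem durfee_bar (k l : ℕ) (hk : 1 ≤ k) (hl : 1 ≤ l)
    (lam : ℕ → ℤ) (hlam : IsBoxPartition k l lam) :
    durfee l (bar k l lam) = durfee l lam := by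
  set d := durfee l lam with hd
  apply le_antisymm
  · apply Finset.sup_le
    intro i hi
    rw [Finset.mem_Icc] at hi
    by_cases hid : i ≤ d
    · split <;> omega
    · have hbar : bar k l lam i = (d : ℤ) - lam (l - i + d + 1) := by
        rw [bar]; simp [← hd, hid]
      have hnn : 0 ≤ lam (l - i + d + 1) := by
        apply lam_nonneg k l lam hlam <;> omega
      have : ¬ ((i : ℤ) ≤ bar k l lam i) := by
        rw [hbar]; push_cast; omega
      simp [this]
  · rcases Nat.eq_zero_or_pos d with h0 | hpos
    · omega
    · have hdl : d ≤ l := durfee_le l lam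
      have hbar : bar k l lam d = (d : ℤ) + k - lam 1 := by
        rw [bar]
        simp [← hd, Nat.sub_self]
      apply le_durfee l _ d hpos hdl
      rw [hbar]
      have := hlam.1
      omega
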